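/- All four complex roots of the polynomial P(T) = 7⁶T⁴ − 7³·8·T³ + 7·2·T² − 8T + 1 have absolute value 7^{−3/2}. -/

import Mathlib

/-- A root of a real quadratic `343 z² + c z + 1` with negative discriminant has
absolute value `7^(-3/2)`. -/
lemma quad_abs (c : ℝ) (hc : c ^ 2 < 1372) (z : ℂ)
    (h : 343 * z ^ 2 + (c : ℂ) * z + 1 = 0) :
    ‖z‖ = (7 : ℝ) ^ (-(3 / 2 : ℝ)) := by
  have hconj : 343 * (starRingEnd ℂ z) ^ 2 + (c : ℂ) * (starRingEnd ℂ z) + 1 = 0 := by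
    have := congrArg (starRingEnd ℂ) h
    simpa [map_ofNat] using this
  have hne : z ≠ starRingEnd ℂ z := by
    intro he
    have hzim : z.im = 0 := by
      have := congrArg Complex.im he
      simp [Complex.conj_im] at this
      linarith
    have hzx : z = ((z.re : ℝ) : ℂ) := by
      apply Complex.ext <;> simp [hzim]
    rw [hzx] at h
    have hre : 343 * z.re ^ 2 + c * z.re + 1 = 0 := by exact_mod_cast h
    nlinarith [sq_nonneg (686 * z.re + c)]
  have hsub : (z - starRingEnd ℂ z) * (343 * (z + starRingEnd ℂ z) + (c : ℂ)) = 0 := by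
    linear_combination h - hconj
  have hsum : (343 : ℂ) * (z + starRingEnd ℂ z) + (c : ℂ) = 0 := by
    rcases mul_eq_zero.mp hsub with h' | h'
    · exact absurd (sub_eq_zero.mp h') hne
    · exact h'
  have hprod : z * starRingEnd ℂ z = 1 / 343 := by
    linear_combination (z * hsum - h) / 343
  have hns : Complex.normSq z = 1 / 343 := by
    have h' : ((Complex.normSq z : ℝ) : ℂ) = ((1 / 343 : ℝ) : ℂ) := by
      rw [← Complex.mul_conj, hprod]; norm_num
    exact_mod_cast h'
  have h1 : ‖z‖ ^ 2 = 1 / 343 := by rw [Complex.sq_norm]; exact hns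
  have h2 : ((7 : ℝ) ^ (-(3 / 2 : ℝ))) ^ 2 = 1 / 343 := by
    rw [← Real.rpow_natCast ((7 : ℝ) ^ (-(3 / 2 : ℝ))) 2, ← Real.rpow_mul (by norm_num)]
    norm_num
  have hnn : (0:ℝ) ≤ (7 : ℝ) ^ (-(3 / 2 : ℝ)) := Real.rpow_nonneg (by norm_num) _
  nlinarith [norm_nonneg z, hnn, h1, h2]

/-- All four complex roots of `P T = 7⁶T⁴ − 7³·8T³ + 7·2T² − 8T + 1` have absolute
value `7^(−3/2)`. -/
theorem frobenius_roots_weil (z : ℂ)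
    (hz : 7 ^ 6 * z ^ 4 - 7 ^ 3 * 8 * z ^ 3 + 7 * 2 * z ^ 2 - 8 * z + 1 = 0) :
    ‖z‖ = (7 : ℝ) ^ (-(3 / 2 : ℝ)) := by
  set s : ℝ := Real.sqrt 43 with hs_def
  have hs : s ^ 2 = 43 := Real.sq_sqrt (by norm_num)
  have hs0 : 0 ≤ s := Real.sqrt_nonneg 43
  have hsC : (s : ℂ) ^ 2 = 43 := by exact_mod_cast congrArg (fun x : ℝ => (x : ℂ)) hs
  have hfac : (343 * z ^ 2 + (((-4 + 4 * s : ℝ)) : ℂ) * z + 1) *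
      (343 * z ^ 2 + (((-4 - 4 * s : ℝ)) : ℂ) * z + 1) = 0 := by
    push_cast
    linear_combination hz - 16 * z ^ 2 * hsC
  rcases mul_eq_zero.mp hfac with h' | h'
  · exact quad_abs (-4 + 4 * s) (by nlinarith) z h'
  · exact quad_abs (-4 - 4 * s) (by nlinarith) z h'
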